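/- arXiv:2511.13926 — 3 statements merged into one kernel-verified Lean document; each statement's English description precedes it below -/
import Mathlib

section
/- Let Z be a chordal graph on N vertices with maximal cliques C₁, ..., C_M. A symmetric negative semidefinite matrix Z (block-wise structured so that block (i,j) is zero whenever (i,j) is not an edge of the graph and i ≠ j) can be written as Z = Σ_{p=1}^M E_{C_p}ᵀ Z_p E_{C_p} where each Z_p is negative semidefinite, and conversely any such sum is a negative semidefinite matrix with the given sparsity structure. -/
open Matrix

/-- A chord of a cycle: an edge of the graph between two vertices of the cycle
that is not an edge of the cycle itself. -/
def HasChord {V : Type*} (G : SimpleGraph V) {v : V} (c : G.Walk v v) : Prop :=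
  ∃ x y : V, x ∈ c.support ∧ y ∈ c.support ∧ G.Adj x y ∧ s(x, y) ∉ c.edges

/-- A graph is chordal if every cycle of length greater than three has a chord. -/
def IsChordal {V : Type*} (G : SimpleGraph V) : Prop :=
  ∀ (v : V) (c : G.Walk v v), c.IsCycle → 4 ≤ c.length → HasChord G c

namespace ChordalDecompAux

open SimpleGraph

variable {V : Type*} {G : SimpleGraph V}

/-- Reachability within a vertex set. -/
def ReachIn (G : SimpleGraph V) (P : Set V) (a b : V) : Prop :=
  ∃ w : G.Walk a b, ∀ x ∈ w.support, x ∈ P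

lemma ReachIn.refl {P : Set V} {a : V} (ha : a ∈ P) : ReachIn G P a a :=
  ⟨Walk.nil, by simp [ha]⟩

lemma ReachIn.symm {P : Set V} {a b : V} : ReachIn G P a b → ReachIn G P b a := by
  rintro ⟨w, hw⟩
  exact ⟨w.reverse, by simpa [Walk.support_reverse] using hw⟩

lemma ReachIn.trans {P : Set V} {a b c : V} :
    ReachIn G P a b → ReachIn G P b c → ReachIn G P a c := by
  rintro ⟨w, hw⟩ ⟨w', hw'⟩
  refine ⟨w.append w', fun x hx => ?_⟩
  rcases (Walk.mem_support_append_iff _ _).1 hx with h | h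
  · exact hw x h
  · exact hw' x h

lemma ReachIn.step {P : Set V} {a u t : V} (h : ReachIn G P a u) (hadj : G.Adj u t)
    (ht : t ∈ P) : ReachIn G P a t := by
  rcases h with ⟨w, hw⟩
  refine ⟨w.concat hadj, fun x hx => ?_⟩
  rw [Walk.support_concat] at hx
  rcases List.mem_append.1 hx with h | h
  · exact hw x h
  · rw [List.mem_singleton] at h
    exact h ▸ ht

lemma ReachIn.of_support [DecidableEq V] {P : Set V} {a b : V} {w : G.Walk a b}
    (hw : ∀ x ∈ w.support, x ∈ P) {z : V} (hz : z ∈ w.support) : ReachIn G P a z :=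
  ⟨w.takeUntil z hz, fun x hx => hw x (w.support_takeUntil_subset hz hx)⟩

lemma escape {Q A : Set V} {x : V}
    (hstep : ∀ u ∈ A, ∀ t, G.Adj u t → t ∈ Q → t ∈ A ∨ t = x) :
    ∀ {s b : V} (w : G.Walk s b), (∀ z ∈ w.support, z ∈ Q) → s ∈ A → b ∉ A →
      ∃ u ∈ A, G.Adj u x := by
  intro s b w
  induction w with
  | nil => intro _ hs hb; exact absurd hs hb
  | @cons s' t' b' h w ih =>
    intro hQ hs hb
    rcases hstep s' hs t' h (hQ t' (by
        rw [Walk.support_cons]; exact List.mem_cons_of_mem _ w.start_mem_support)) with ht | rfl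
    · exact ih (fun z hz => hQ z (by
        rw [Walk.support_cons]; exact List.mem_cons_of_mem _ hz)) ht hb
    · exact ⟨s', hs, h⟩

lemma dropUntil_start [DecidableEq V] {s b : V} {t : V} (h : G.Adj s t) (p : G.Walk t b)
    (hu : s ∈ (Walk.cons h p).support) :
    (Walk.cons h p).dropUntil s hu = Walk.cons h p := by
  simp [Walk.dropUntil]

lemma dropUntil_cons_of_ne [DecidableEq V] {s t b u : V} (h : G.Adj s t) (p : G.Walk t b)
    (hne : s ≠ u) (hu : u ∈ (Walk.cons h p).support) (hu' : u ∈ p.support) :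
    (Walk.cons h p).dropUntil u hu = p.dropUntil u hu' := by
  simp [Walk.dropUntil, hne]

lemma mem_dropUntil_or [DecidableEq V] {x y : V} (q : G.Walk x y) :
    ∀ {u w : V} (hu : u ∈ q.support) (hw : w ∈ q.support), u ≠ w →
      w ∈ (q.dropUntil u hu).support ∨ u ∈ (q.dropUntil w hw).support := by
  induction q with
  | nil =>
    intro u w hu hw hne
    rw [Walk.mem_support_nil_iff] at hu hw
    exact absurd (hu.trans hw.symm) hne
  | @cons s t b h p ih =>
    intro u w hu hw hne
    by_cases hsu : s = u
    · subst hsu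
      rw [dropUntil_start h p hu]
      exact Or.inl hw
    · by_cases hsw : s = w
      · subst hsw
        rw [dropUntil_start h p hw]
        exact Or.inr hu
      · have hu' : u ∈ p.support := by
          rcases List.mem_cons.1 (by simpa [Walk.support_cons] using hu) with rfl | h'
          · exact absurd rfl hsu
          · exact h'
        have hw' : w ∈ p.support := by
          rcases List.mem_cons.1 (by simpa [Walk.support_cons] using hw) with rfl | h'
          · exact absurd rfl hsw
          · exact h'
        rw [dropUntil_cons_of_ne h p hsu hu hu', dropUntil_cons_of_ne h p hsw hw hw']
        exact ih hu' hw' hne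

lemma two_le_length {x y : V} (hxy : x ≠ y) (hadj : ¬ G.Adj x y) (q : G.Walk x y) :
    2 ≤ q.length := by
  cases q with
  | nil => exact absurd rfl hxy
  | cons h' q' =>
    cases q' with
    | nil => exact absurd h' hadj
    | cons h'' q'' => simp [Walk.length_cons]

lemma edge_mem_of_length_one {u w : V} (m : G.Walk u w) (h : m.length = 1) :
    s(u, w) ∈ m.edges := by
  cases m with
  | nil => simp at h
  | @cons _ t _ h' m' =>
    have h0 : m'.length = 0 := by simpa [Walk.length_cons] using h
    have := Walk.eq_of_length_eq_zero h0
    subst this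
    simp [Walk.edges_cons]

lemma exists_minpath [DecidableEq V] {x y : V} (hxy : x ≠ y) (hadj : ¬ G.Adj x y)
    {P : Set V} (h0 : ∃ w : G.Walk x y, ∀ z ∈ w.support, z ∈ P) :
    ∃ q : G.Walk x y, (∀ z ∈ q.support, z ∈ P) ∧ q.IsPath ∧ 2 ≤ q.length ∧
      ∀ u ∈ q.support, ∀ w ∈ q.support, G.Adj u w → s(u, w) ∈ q.edges := by
  classical
  have hex : ∃ n, ∃ w : G.Walk x y, (∀ z ∈ w.support, z ∈ P) ∧ w.length = n := by
    obtain ⟨w, hw⟩ := h0; exact ⟨w.length, w, hw, rfl⟩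
  obtain ⟨w0, hw0P, hw0len⟩ := Nat.find_spec hex
  have hmin : ∀ (q' : G.Walk x y), (∀ z ∈ q'.support, z ∈ P) → Nat.find hex ≤ q'.length :=
    fun q' h => Nat.find_min' hex ⟨q', h, rfl⟩
  have hqP : ∀ z ∈ w0.bypass.support, z ∈ P :=
    fun z hz => hw0P z (w0.support_bypass_subset hz)
  set q : G.Walk x y := w0.bypass with hqdef
  have hqlen : q.length = Nat.find hex :=
    le_antisymm (hw0len ▸ w0.length_bypass_le) (hmin q hqP)
  refine ⟨q, hqP, w0.bypass_isPath, two_le_length hxy hadj q, ?_⟩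
  intro u hu w hw huw
  by_contra hne_edge
  have hkey : ∀ (u w : V) (hu : u ∈ q.support) (hw : w ∈ q.support), G.Adj u w →
      s(u, w) ∉ q.edges → w ∈ (q.dropUntil u hu).support → False := by
    intro u w hu hw huw hne hmem
    have hdsub : (q.dropUntil u hu).support ⊆ q.support := q.support_dropUntil_subset hu
    have hdedge : (q.dropUntil u hu).edges ⊆ q.edges := q.edges_dropUntil_subset hu
    have hmlen : 2 ≤ ((q.dropUntil u hu).takeUntil w hmem).length := by
      have h0 : ((q.dropUntil u hu).takeUntil w hmem).length ≠ 0 :=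
        fun h => (G.ne_of_adj huw) (Walk.eq_of_length_eq_zero h)
      have h1 : ((q.dropUntil u hu).takeUntil w hmem).length ≠ 1 := fun h =>
        hne (hdedge ((q.dropUntil u hu).edges_takeUntil_subset hmem
          (edge_mem_of_length_one _ h)))
      omega
    set r := (q.dropUntil u hu).dropUntil w hmem with hr
    set q2 := (q.takeUntil u hu).append (Walk.cons huw r) with hq2
    have hq2P : ∀ z ∈ q2.support, z ∈ P := by
      intro z hz
      rcases (Walk.mem_support_append_iff _ _).1 hz with h | h
      · exact hqP z (q.support_takeUntil_subset hu h)
      · rcases List.mem_cons.1 (by simpa [Walk.support_cons] using h) with rfl | h'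
        · exact hqP z hu
        · exact hqP z (hdsub ((q.dropUntil u hu).support_dropUntil_subset hmem h'))
    have e1 : (q.takeUntil u hu).length + (q.dropUntil u hu).length = q.length := by
      have := congrArg Walk.length (q.take_spec hu)
      rwa [Walk.length_append] at this
    have e2 : ((q.dropUntil u hu).takeUntil w hmem).length + r.length
        = (q.dropUntil u hu).length := by
      have := congrArg Walk.length ((q.dropUntil u hu).take_spec hmem)
      rwa [Walk.length_append] at this
    have e3 : q2.length = (q.takeUntil u hu).length + (r.length + 1) := by
      simp [hq2, Walk.length_append, Walk.length_cons]
    have := hmin q2 hq2P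
    omega
  rcases mem_dropUntil_or q hu hw (G.ne_of_adj huw) with h | h
  · exact hkey u w hu hw huw hne_edge h
  · exact hkey w u hw hu huw.symm (by rwa [Sym2.eq_swap]) h


lemma adj_of_sep [DecidableEq V] (hch : IsChordal G) {A B : Set V} {x y : V}
    (hdisj : ∀ z, z ∈ A → z ∈ B → False)
    (hxA : x ∉ A) (hyA : y ∉ A) (hxB : x ∉ B) (hyB : y ∉ B) (hxy : x ≠ y)
    (hAB : ∀ u ∈ A, ∀ w ∈ B, ¬G.Adj u w)
    (hpA : ∃ w : G.Walk x y, ∀ z ∈ w.support, z = x ∨ z = y ∨ z ∈ A)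
    (hpB : ∃ w : G.Walk x y, ∀ z ∈ w.support, z = x ∨ z = y ∨ z ∈ B) :
    G.Adj x y := by
  by_contra hadj
  obtain ⟨p, hpP, hppath, hplen, hpchord⟩ :=
    exists_minpath (P := {z | z = x ∨ z = y ∨ z ∈ A}) hxy hadj hpA
  obtain ⟨q', hqP', hqpath', hqlen', hqchord'⟩ :=
    exists_minpath (P := {z | z = x ∨ z = y ∨ z ∈ B}) hxy hadj hpB
  set q : G.Walk y x := q'.reverse with hqdef
  have hqsup : ∀ z, z ∈ q.support ↔ z ∈ q'.support := by
    intro z; rw [hqdef, Walk.support_reverse, List.mem_reverse]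
  have hqP : ∀ z ∈ q.support, z = x ∨ z = y ∨ z ∈ B :=
    fun z hz => hqP' z ((hqsup z).1 hz)
  have hqpath : q.IsPath := hqpath'.reverse
  have hqlen : q.length = q'.length := Walk.length_reverse _
  have hqchord : ∀ u ∈ q.support, ∀ w ∈ q.support, G.Adj u w → s(u, w) ∈ q.edges := by
    intro u hu w hw h
    have := hqchord' u ((hqsup u).1 hu) w ((hqsup w).1 hw) h
    rw [hqdef, Walk.edges_reverse, List.mem_reverse]
    exact this
  set c : G.Walk x x := p.append q with hc
  have hinter : ∀ z, z ∈ p.support → z ∈ q.support → z = x ∨ z = y := by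
    intro z hzp hzq
    rcases hpP z hzp with rfl | rfl | hA
    · exact Or.inl rfl
    · exact Or.inr rfl
    · rcases hqP z hzq with rfl | rfl | hB
      · exact absurd hA hxA
      · exact absurd hA hyA
      · exact absurd hB (fun h => hdisj z hA h)
  have hxq : x ∈ q.support := q.end_mem_support
  have hyq : y ∈ q.support := q.start_mem_support
  have hxp : x ∈ p.support := p.start_mem_support
  have hyp : y ∈ p.support := p.end_mem_support
  have hclen : c.length = p.length + q.length := Walk.length_append _ _
  have hcycle : c.IsCycle := by
    rw [Walk.isCycle_def]
    refine ⟨⟨?_⟩, ?_, ?_⟩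
    · -- trail : edges nodup
      rw [hc, Walk.edges_append, List.nodup_append]
      refine ⟨hppath.isTrail.edges_nodup, hqpath.isTrail.edges_nodup, ?_⟩
      intro e hep e' heq hee'
      rw [← hee'] at heq
      induction e with
      | h u v =>
        have hup : u ∈ p.support := p.fst_mem_support_of_mem_edges hep
        have hvp : v ∈ p.support := p.snd_mem_support_of_mem_edges hep
        have huq : u ∈ q.support := q.fst_mem_support_of_mem_edges heq
        have hvq : v ∈ q.support := q.snd_mem_support_of_mem_edges heq
        have hadjuv : G.Adj u v := p.adj_of_mem_edges hep
        rcases hinter u hup huq with rfl | rfl <;> rcases hinter v hvp hvq with rfl | rfl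
        · exact G.loopless.irrefl _ hadjuv
        · exact hadj hadjuv
        · exact hadj hadjuv.symm
        · exact G.loopless.irrefl _ hadjuv
    · -- not nil
      intro h
      have := congrArg Walk.length h
      rw [hclen] at this
      simp only [Walk.length_nil] at this
      omega
    · -- support tail nodup
      have hctail : c.support.tail = p.support.tail ++ q.support.tail := by
        rw [hc, Walk.support_append]
        rw [p.support_eq_cons]
        rfl
      rw [hctail, List.nodup_append]
      have hpnodup := hppath.support_nodup
      have hqnodup := hqpath.support_nodup
      refine ⟨?_, ?_, ?_⟩
      · rw [p.support_eq_cons] at hpnodup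
        exact (List.nodup_cons.1 hpnodup).2
      · rw [q.support_eq_cons] at hqnodup
        exact (List.nodup_cons.1 hqnodup).2
      · intro z hzp z' hzq hzz'
        rw [← hzz'] at hzq
        have hzp' : z ∈ p.support := by rw [p.support_eq_cons]; exact List.mem_cons_of_mem _ hzp
        have hzq' : z ∈ q.support := by rw [q.support_eq_cons]; exact List.mem_cons_of_mem _ hzq
        rcases hinter z hzp' hzq' with rfl | rfl
        · rw [p.support_eq_cons] at hpnodup
          exact (List.nodup_cons.1 hpnodup).1 hzp
        · rw [q.support_eq_cons] at hqnodup
          exact (List.nodup_cons.1 hqnodup).1 hzq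
  obtain ⟨u, w, hu, hw, huw, hne⟩ := hch x c hcycle (by omega)
  have hedges : c.edges = p.edges ++ q.edges := Walk.edges_append _ _
  have case_p : u ∈ p.support → w ∈ p.support → False := fun h1 h2 =>
    hne (by rw [hedges]; exact List.mem_append_left _ (hpchord u h1 w h2 huw))
  have case_q : u ∈ q.support → w ∈ q.support → False := fun h1 h2 =>
    hne (by rw [hedges]; exact List.mem_append_right _ (hqchord u h1 w h2 huw))
  have husup : u ∈ p.support ∨ u ∈ q.support := by
    rw [hc] at hu; exact (Walk.mem_support_append_iff _ _).1 hu
  have hwsup : w ∈ p.support ∨ w ∈ q.support := by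
    rw [hc] at hw; exact (Walk.mem_support_append_iff _ _).1 hw
  by_cases hup : u ∈ p.support <;> by_cases hwp : w ∈ p.support
  · exact case_p hup hwp
  · have hwq : w ∈ q.support := hwsup.resolve_left hwp
    by_cases huq : u ∈ q.support
    · exact case_q huq hwq
    · have huA : u ∈ A := by
        rcases hpP u hup with rfl | rfl | h
        · exact absurd hxq huq
        · exact absurd hyq huq
        · exact h
      have hwB : w ∈ B := by
        rcases hqP w hwq with rfl | rfl | h
        · exact absurd hxp hwp
        · exact absurd hyp hwp
        · exact h
      exact hAB u huA w hwB huw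
  · have huq : u ∈ q.support := husup.resolve_left hup
    by_cases hwq : w ∈ q.support
    · exact case_q huq hwq
    · have hwA : w ∈ A := by
        rcases hpP w hwp with rfl | rfl | h
        · exact absurd hxq hwq
        · exact absurd hyq hwq
        · exact h
      have huB : u ∈ B := by
        rcases hqP u huq with rfl | rfl | h
        · exact absurd hxp hup
        · exact absurd hyp hup
        · exact h
      exact hAB w hwA u huB huw.symm
  · exact case_q (husup.resolve_left hup) (hwsup.resolve_left hwp)


variable {N : ℕ}

/-- `v` is a simplicial vertex of the subgraph induced on `S`. -/
def SimpIn (G : SimpleGraph V) (S : Finset V) (v : V) : Prop :=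
  v ∈ S ∧ ∀ x ∈ S, ∀ y ∈ S, G.Adj v x → G.Adj v y → x ≠ y → G.Adj x y

lemma dirac [DecidableEq V] (hch : IsChordal G) :
    ∀ (n : ℕ) (S : Finset V), S.card ≤ n → S.Nonempty →
      (∀ x ∈ S, ∀ y ∈ S, x ≠ y → G.Adj x y) ∨
      (∃ v ∈ S, ∃ w ∈ S, v ≠ w ∧ ¬ G.Adj v w ∧ SimpIn G S v ∧ SimpIn G S w) := by
  intro n
  induction n with
  | zero =>
    intro S hS hne
    exact absurd (Finset.card_eq_zero.1 (Nat.le_zero.1 hS)) hne.ne_empty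
  | succ n ih =>
    intro S hcard hne
    by_cases hclq : ∀ x ∈ S, ∀ y ∈ S, x ≠ y → G.Adj x y
    · exact Or.inl hclq
    right
    push_neg at hclq
    obtain ⟨a, haS, b, hbS, hab, hnadj⟩ := hclq
    classical
    set Sep : Finset V → Prop :=
      fun T => a ∉ T ∧ b ∉ T ∧ ¬ ReachIn G (↑(S \ T) : Set V) a b with hSepDef
    have hSep0 : Sep (S \ {a, b}) := by
      refine ⟨by simp, by simp, ?_⟩
      rintro ⟨w, hw⟩
      have hsub : ∀ z ∈ w.support, z = a ∨ z = b := by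
        intro z hz
        have h1 := hw z hz
        simp only [Finset.coe_sdiff, Set.mem_diff, Finset.mem_coe, Finset.mem_sdiff,
          Finset.mem_insert, Finset.mem_singleton, not_and, not_not] at h1
        tauto
      cases w with
      | nil => exact hab rfl
      | @cons _ t _ h w' =>
        have ht : t ∈ (Walk.cons h w').support := by
          rw [Walk.support_cons]; exact List.mem_cons_of_mem _ w'.start_mem_support
        rcases hsub t ht with rfl | rfl
        · exact G.loopless.irrefl _ h
        · exact hnadj h
    have hfilter : ((S.powerset).filter Sep).Nonempty :=
      ⟨S \ {a, b}, by
        rw [Finset.mem_filter, Finset.mem_powerset]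
        exact ⟨Finset.sdiff_subset, hSep0⟩⟩
    obtain ⟨T, hTmem, hTmin⟩ := Finset.exists_min_image _ Finset.card hfilter
    rw [Finset.mem_filter, Finset.mem_powerset] at hTmem
    have hTS : T ⊆ S := hTmem.1
    have haT : a ∉ T := hTmem.2.1
    have hbT : b ∉ T := hTmem.2.2.1
    have hTsep : ¬ ReachIn G (↑(S \ T) : Set V) a b := hTmem.2.2.2
    set U : Set V := (↑(S \ T) : Set V) with hUdef
    have hUmem : ∀ z, z ∈ U ↔ z ∈ S ∧ z ∉ T := by
      intro z; rw [hUdef]; simp [Finset.mem_sdiff]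
    set Acomp : V → Set V := fun c => {z | z ∈ U ∧ ReachIn G U c z} with hAcompDef
    have haU : a ∈ U := (hUmem a).2 ⟨haS, haT⟩
    have hbU : b ∈ U := (hUmem b).2 ⟨hbS, hbT⟩
    have hmemA : ∀ c, c ∈ U → c ∈ Acomp c := fun c hc => ⟨hc, ReachIn.refl hc⟩
    have hclosed : ∀ c, ∀ u ∈ Acomp c, ∀ t, G.Adj u t → t ∈ U → t ∈ Acomp c :=
      fun c u hu t hadj ht => ⟨ht, hu.2.step hadj ht⟩
    have hAsubU : ∀ c, Acomp c ⊆ U := fun c z hz => hz.1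
    have hnreach_ba : ¬ ReachIn G U b a := fun h => hTsep h.symm
    have hdisjAB : ∀ z, z ∈ Acomp a → z ∈ Acomp b → False := fun z hza hzb =>
      hTsep (hza.2.trans hzb.2.symm)
    have hbA : b ∉ Acomp a := fun h => hTsep h.2
    have haB : a ∉ Acomp b := fun h => hnreach_ba h.2
    have hABadj : ∀ u ∈ Acomp a, ∀ w ∈ Acomp b, ¬ G.Adj u w := by
      intro u hu w hw hadj
      exact hdisjAB w (hclosed a u hu w hadj (hw.1)) hw
    have hconn : ∀ c, ∀ u ∈ Acomp c, ∃ w : G.Walk c u, ∀ z ∈ w.support, z ∈ Acomp c := by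
      intro c u hu
      obtain ⟨w, hw⟩ := hu.2
      exact ⟨w, fun z hz => ⟨hw z hz, ReachIn.of_support hw hz⟩⟩
    -- every vertex of T has a neighbour in each of the two components
    have hnbr : ∀ x ∈ T, ∀ c d : V, c ∈ U → ReachIn G (↑(S \ T.erase x) : Set V) c d →
        d ∉ Acomp c → ∃ u ∈ Acomp c, G.Adj u x := by
      intro x hxT c d hcU hreach hd
      obtain ⟨w, hw⟩ := hreach
      refine escape (Q := (↑(S \ T.erase x) : Set V)) (A := Acomp c) (x := x) ?_ w hw
        (hmemA c hcU) hd
      intro u hu t hadj ht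
      have ht' : t ∈ S ∧ (t ∈ T → t = x) := by
        simpa [Finset.mem_sdiff, Finset.mem_erase] using ht
      by_cases htT : t ∈ T
      · exact Or.inr (ht'.2 htT)
      · exact Or.inl (hclosed c u hu t hadj ((hUmem t).2 ⟨ht'.1, htT⟩))
    have hreach_erase : ∀ x ∈ T, ReachIn G (↑(S \ T.erase x) : Set V) a b := by
      intro x hxT
      by_contra hr
      have hsep : Sep (T.erase x) :=
        ⟨fun h => haT (Finset.mem_of_mem_erase h),
         fun h => hbT (Finset.mem_of_mem_erase h), hr⟩
      have hmem : T.erase x ∈ (S.powerset).filter Sep := by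
        rw [Finset.mem_filter, Finset.mem_powerset]
        exact ⟨(Finset.erase_subset _ _).trans hTS, hsep⟩
      have hle := hTmin _ hmem
      have hcarde := Finset.card_erase_of_mem hxT
      have hpos : 0 < T.card := Finset.card_pos.2 ⟨x, hxT⟩
      omega
    have hnbrA : ∀ x ∈ T, ∃ u ∈ Acomp a, G.Adj u x :=
      fun x hxT => hnbr x hxT a b haU (hreach_erase x hxT) hbA
    have hnbrB : ∀ x ∈ T, ∃ u ∈ Acomp b, G.Adj u x :=
      fun x hxT => hnbr x hxT b a hbU (hreach_erase x hxT).symm haB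
    have hTU : ∀ x ∈ T, x ∉ U := fun x hx h => ((hUmem x).1 h).2 hx
    have hTclq : ∀ x ∈ T, ∀ y ∈ T, x ≠ y → G.Adj x y := by
      intro x hxT y hyT hxyne
      obtain ⟨ux, huxA, huxadj⟩ := hnbrA x hxT
      obtain ⟨uy, huyA, huyadj⟩ := hnbrA y hyT
      obtain ⟨vx, hvxB, hvxadj⟩ := hnbrB x hxT
      obtain ⟨vy, hvyB, hvyadj⟩ := hnbrB y hyT
      have hwalk : ∀ (c : V) (u u' : V), u ∈ Acomp c → u' ∈ Acomp c →
          G.Adj u x → G.Adj u' y →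
          ∃ w : G.Walk x y, ∀ z ∈ w.support, z = x ∨ z = y ∨ z ∈ Acomp c := by
        intro c u u' hu hu' hux hu'y
        obtain ⟨w1, hw1⟩ := hconn c u hu
        obtain ⟨w2, hw2⟩ := hconn c u' hu'
        refine ⟨Walk.cons hux.symm ((w1.reverse.append w2).concat hu'y), ?_⟩
        intro z hz
        rw [Walk.support_cons] at hz
        rcases List.mem_cons.1 hz with rfl | hz'
        · exact Or.inl rfl
        · rw [Walk.support_concat] at hz'
          rcases List.mem_append.1 hz' with hz'' | hz''
          · rcases (Walk.mem_support_append_iff _ _).1 hz'' with hz3 | hz3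
            · rw [Walk.support_reverse, List.mem_reverse] at hz3
              exact Or.inr (Or.inr (hw1 z hz3))
            · exact Or.inr (Or.inr (hw2 z hz3))
          · rw [List.mem_singleton] at hz''
            exact Or.inr (Or.inl hz'')
      exact adj_of_sep hch (A := Acomp a) (B := Acomp b) hdisjAB
        (fun h => hTU x hxT (hAsubU a h)) (fun h => hTU y hyT (hAsubU a h))
        (fun h => hTU x hxT (hAsubU b h)) (fun h => hTU y hyT (hAsubU b h))
        hxyne hABadj
        (hwalk a ux uy huxA huyA huxadj huyadj)
        (hwalk b vx vy hvxB hvyB hvxadj hvyadj)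
    -- the main recursion on each side
    have hside : ∀ c d : V, c ∈ U → d ∈ S → d ∉ Acomp c → d ∉ T →
        ∃ v ∈ Acomp c, SimpIn G S v := by
      intro c d hcU hdS hdA hdT
      set SA : Finset V := ((S \ T).filter (fun z => z ∈ Acomp c)) ∪ T with hSAdef
      have hmemSA : ∀ z, z ∈ SA ↔ (z ∈ Acomp c ∨ z ∈ T) := by
        intro z
        rw [hSAdef, Finset.mem_union, Finset.mem_filter, Finset.mem_sdiff]
        constructor
        · rintro (⟨_, h⟩ | h)
          · exact Or.inl h
          · exact Or.inr h
        · rintro (h | h)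
          · exact Or.inl ⟨(hUmem z).1 (hAsubU c h), h⟩
          · exact Or.inr h
      have hSAS : SA ⊆ S := by
        intro z hz
        rcases (hmemSA z).1 hz with h | h
        · exact ((hUmem z).1 (hAsubU c h)).1
        · exact hTS h
      have hdSA : d ∉ SA := by
        intro h
        rcases (hmemSA d).1 h with h | h
        · exact hdA h
        · exact hdT h
      have hSAcard : SA.card ≤ n := by
        have hss : SA ⊂ S := (Finset.ssubset_iff_of_subset hSAS).2 ⟨d, hdS, hdSA⟩
        have := Finset.card_lt_card hss
        omega
      have hcSA : c ∈ SA := (hmemSA c).2 (Or.inl (hmemA c hcU))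
      have hup : ∀ v ∈ Acomp c, ∀ z ∈ S, G.Adj v z → z ∈ SA := by
        intro v hv z hzS hadj
        by_cases hzT : z ∈ T
        · exact (hmemSA z).2 (Or.inr hzT)
        · exact (hmemSA z).2 (Or.inl (hclosed c v hv z hadj ((hUmem z).2 ⟨hzS, hzT⟩)))
      have hlift : ∀ v ∈ Acomp c,
          (∀ x ∈ SA, ∀ y ∈ SA, G.Adj v x → G.Adj v y → x ≠ y → G.Adj x y) →
          SimpIn G S v := by
        intro v hv hprop
        refine ⟨((hUmem v).1 (hAsubU c hv)).1, ?_⟩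
        intro x hxS y hyS hvx hvy hxy
        exact hprop x (hup v hv x hxS hvx) y (hup v hv y hyS hvy) hvx hvy hxy
      rcases ih SA hSAcard ⟨c, hcSA⟩ with hclq' | ⟨v, hvSA, w, hwSA, hvw, hnadjvw, hsv, hsw⟩
      · exact ⟨c, hmemA c hcU,
          hlift c (hmemA c hcU) (fun x hx y hy _ _ hxy => hclq' x hx y hy hxy)⟩
      · have hone : v ∈ Acomp c ∨ w ∈ Acomp c := by
          by_contra hcon
          push_neg at hcon
          have hvT : v ∈ T := ((hmemSA v).1 hvSA).resolve_left hcon.1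
          have hwT : w ∈ T := ((hmemSA w).1 hwSA).resolve_left hcon.2
          exact hnadjvw (hTclq v hvT w hwT hvw)
        rcases hone with h | h
        · exact ⟨v, h, hlift v h hsv.2⟩
        · exact ⟨w, h, hlift w h hsw.2⟩
    obtain ⟨vA, hvA, hsA⟩ := hside a b haU hbS hbA hbT
    obtain ⟨vB, hvB, hsB⟩ := hside b a hbU haS haB haT
    exact ⟨vA, hsA.1, vB, hsB.1,
      fun h => hdisjAB vA hvA (h ▸ hvB),
      hABadj vA hvA vB hvB, hsA, hsB⟩

lemma exists_simplicial [DecidableEq V] (hch : IsChordal G) (S : Finset V)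
    (hne : S.Nonempty) : ∃ v, SimpIn G S v := by
  rcases dirac hch S.card S le_rfl hne with hclq | ⟨v, _, _, _, _, _, hv, _⟩
  · obtain ⟨v, hv⟩ := hne
    exact ⟨v, hv, fun x hx y hy _ _ hxy => hclq x hx y hy hxy⟩
  · exact ⟨v, hv⟩


lemma isHermitian_of_symm {A : Matrix (Fin N) (Fin N) ℝ} (h : ∀ i j, A i j = A j i) :
    A.IsHermitian := by
  ext i j
  simp only [conjTranspose_apply, star_trivial]
  exact h j i

lemma symm_of_isHermitian {A : Matrix (Fin N) (Fin N) ℝ} (h : A.IsHermitian) (i j : Fin N) :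
    A i j = A j i := by
  have := congrFun (congrFun h.symm i) j
  simpa [conjTranspose_apply] using this

lemma psd_add {A B : Matrix (Fin N) (Fin N) ℝ} (hA : A.PosSemidef) (hB : B.PosSemidef) :
    (A + B).PosSemidef := by
  exact hA.add hB

lemma psd_sum {M : ℕ} (f : Fin M → Matrix (Fin N) (Fin N) ℝ) (h : ∀ p, (f p).PosSemidef) :
    (∑ p, f p).PosSemidef := by
  classical
  exact Finset.sum_induction f _ (fun a b ha hb => psd_add ha hb)
    Matrix.PosSemidef.zero (fun p _ => h p)

lemma dot_symm {B : Matrix (Fin N) (Fin N) ℝ} (hB : B.IsHermitian) (u v : Fin N → ℝ) :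
    u ⬝ᵥ B *ᵥ v = v ⬝ᵥ B *ᵥ u := by
  have hBij := symm_of_isHermitian hB
  simp only [dotProduct, mulVec, Finset.mul_sum]
  rw [Finset.sum_comm]
  refine Finset.sum_congr rfl fun j _ => Finset.sum_congr rfl fun i _ => ?_
  rw [hBij j i]; ring

lemma psd_cs {B : Matrix (Fin N) (Fin N) ℝ} (hB : B.PosSemidef) (x y : Fin N → ℝ) :
    (x ⬝ᵥ B *ᵥ y) * (x ⬝ᵥ B *ᵥ y) ≤ (x ⬝ᵥ B *ᵥ x) * (y ⬝ᵥ B *ᵥ y) := by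
  have hquad : ∀ t : ℝ, 0 ≤ (y ⬝ᵥ B *ᵥ y) * (t * t) + (2 * (x ⬝ᵥ B *ᵥ y)) * t
      + (x ⬝ᵥ B *ᵥ x) := by
    intro t
    have h := hB.dotProduct_mulVec_nonneg (x + t • y)
    have hxpand : (x + t • y) ⬝ᵥ B *ᵥ (x + t • y)
        = (y ⬝ᵥ B *ᵥ y) * (t * t) + (2 * (x ⬝ᵥ B *ᵥ y)) * t + (x ⬝ᵥ B *ᵥ x) := by
      rw [mulVec_add, dotProduct_add, add_dotProduct, add_dotProduct,
        mulVec_smul, smul_dotProduct, dotProduct_smul, smul_dotProduct, dotProduct_smul,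
        dot_symm hB.1 y x]
      simp only [smul_eq_mul]
      ring
    rw [show star (x + t • y) = x + t • y from star_trivial _] at h
    rw [hxpand] at h
    exact h
  have hd := discrim_le_zero hquad
  rw [discrim] at hd
  nlinarith [hd]

lemma quad_single (B : Matrix (Fin N) (Fin N) ℝ) (i j : Fin N) :
    (Pi.single i 1 : Fin N → ℝ) ⬝ᵥ B *ᵥ (Pi.single j 1) = B i j := by
  rw [mulVec_single]
  simp [single_dotProduct]

lemma psd_row_zero {B : Matrix (Fin N) (Fin N) ℝ} (hB : B.PosSemidef) {i : Fin N}
    (h : B i i = 0) (j : Fin N) : B i j = 0 := by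
  have hcs := psd_cs hB (Pi.single i 1) (Pi.single j 1)
  rw [quad_single, quad_single, quad_single, h] at hcs
  nlinarith [hcs]

lemma vecMulVec_mulVec (z x : Fin N → ℝ) :
    vecMulVec z z *ᵥ x = (z ⬝ᵥ x) • z := by
  ext i
  simp only [mulVec, dotProduct, vecMulVec_apply, Pi.smul_apply, smul_eq_mul, Finset.sum_mul]
  refine Finset.sum_congr rfl fun j _ => ?_
  ring

lemma quad_vecMulVec (z x : Fin N → ℝ) :
    x ⬝ᵥ (vecMulVec z z) *ᵥ x = (z ⬝ᵥ x) * (z ⬝ᵥ x) := by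
  rw [vecMulVec_mulVec, dotProduct_smul, smul_eq_mul, dotProduct_comm]

lemma psd_smul_vecMulVec (z : Fin N → ℝ) {c : ℝ} (hc : 0 ≤ c) :
    (c • vecMulVec z z).PosSemidef := by
  refine PosSemidef.of_dotProduct_mulVec_nonneg ?_ ?_
  · apply isHermitian_of_symm
    intro i j
    simp only [Matrix.smul_apply, vecMulVec_apply, smul_eq_mul]
    ring
  · intro x
    rw [show star x = x from star_trivial _]
    rw [smul_mulVec, dotProduct_smul, smul_eq_mul, quad_vecMulVec]
    nlinarith [mul_self_nonneg (z ⬝ᵥ x)]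


lemma exists_max_clique (G : SimpleGraph (Fin N)) {K : Set (Fin N)}
    (hK : G.IsClique K) : ∃ s, Maximal G.IsClique s ∧ K ⊆ s := by
  obtain ⟨s, hs, hmax⟩ := Finite.exists_le_maximal hK
  exact ⟨s, hmax, hs⟩

lemma decomp_aux {M : ℕ} (G : SimpleGraph (Fin N)) (hch : IsChordal G)
    (C : Fin M → Set (Fin N))
    (hCall : ∀ s : Set (Fin N), Maximal G.IsClique s → ∃ p, s = C p) :
    ∀ (n : ℕ) (S : Finset (Fin N)) (Z : Matrix (Fin N) (Fin N) ℝ),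
      S.card ≤ n → (-Z).PosSemidef →
      (∀ i j, (i ∉ S ∨ j ∉ S) → Z i j = 0) →
      (∀ i j, i ≠ j → ¬ G.Adj i j → Z i j = 0) →
      ∃ W : Fin M → Matrix (Fin N) (Fin N) ℝ,
        (∀ p, (-(W p)).PosSemidef) ∧
        (∀ p i j, (i ∉ C p ∨ j ∉ C p) → W p i j = 0) ∧
        Z = ∑ p, W p := by
  intro n
  induction n with
  | zero =>
    intro S Z hcard hpsd hsupp hpat
    have hS : S = ∅ := Finset.card_eq_zero.1 (Nat.le_zero.1 hcard)
    have hZ : Z = 0 := by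
      ext i j; exact hsupp i j (Or.inl (by simp [hS]))
    exact ⟨fun _ => 0, fun p => by simpa using Matrix.PosSemidef.zero,
      fun p i j _ => rfl, by simp [hZ]⟩
  | succ n ih =>
    intro S Z hcard hpsd hsupp hpat
    by_cases hc : S.card ≤ n
    · exact ih S Z hc hpsd hsupp hpat
    have hSne : S.Nonempty := by
      rw [Finset.nonempty_iff_ne_empty]
      intro h
      exact hc (by simp [h])
    obtain ⟨v, hvS, hvsimp⟩ := exists_simplicial hch S hSne
    have hZsym : ∀ i j, Z i j = Z j i := by
      intro i j
      have h := symm_of_isHermitian hpsd.1 i j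
      simp only [Matrix.neg_apply, neg_inj] at h
      exact h
    have hZvv : Z v v ≤ 0 := by
      have h := hpsd.dotProduct_mulVec_nonneg (Pi.single v 1)
      rw [show star (Pi.single v 1 : Fin N → ℝ) = Pi.single v 1 from star_trivial _,
        quad_single] at h
      simp only [Matrix.neg_apply] at h
      linarith
    have hmemerase : ∀ i : Fin N, i ∉ S.erase v → i = v ∨ i ∉ S := by
      intro i h
      by_cases hiv : i = v
      · exact Or.inl hiv
      · exact Or.inr (fun hiS => h (Finset.mem_erase.2 ⟨hiv, hiS⟩))
    have hcarderase : (S.erase v).card ≤ n := by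
      have := Finset.card_erase_of_mem hvS
      have hpos : 0 < S.card := Finset.card_pos.2 hSne
      omega
    rcases eq_or_lt_of_le hZvv with hzero | hneg
    · -- Z v v = 0 : row v vanishes
      have hBvv : (-Z) v v = 0 := by simp [hzero]
      have hrow : ∀ j, Z v j = 0 := by
        intro j
        have h := psd_row_zero hpsd hBvv j
        simp only [Matrix.neg_apply, neg_eq_zero] at h
        exact h
      refine ih (S.erase v) Z hcarderase hpsd ?_ hpat
      intro i j hij
      rcases hij with hi | hj
      · rcases hmemerase i hi with rfl | h
        · exact hrow j
        · exact hsupp i j (Or.inl h)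
      · rcases hmemerase j hj with rfl | h
        · exact (hZsym i j).trans (hrow i)
        · exact hsupp i j (Or.inr h)
    · -- Z v v < 0
      set a : ℝ := Z v v with ha
      set z : Fin N → ℝ := fun i => Z i v with hzdef
      have hane : a ≠ 0 := ne_of_lt hneg
      set K : Set (Fin N) := insert v {x | x ∈ S ∧ G.Adj v x} with hKdef
      have hKclq : G.IsClique K := by
        intro x hx y hy hne
        rcases Set.mem_insert_iff.1 hx with rfl | hx' <;>
          rcases Set.mem_insert_iff.1 hy with rfl | hy'
        · exact absurd rfl hne
        · exact hy'.2
        · exact hx'.2.symm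
        · exact hvsimp x hx'.1 y hy'.1 hx'.2 hy'.2 hne
      obtain ⟨s, hmax, hKs⟩ := exists_max_clique G hKclq
      obtain ⟨p₀, hp₀⟩ := hCall s hmax
      have hzK : ∀ i, z i ≠ 0 → i ∈ K := by
        intro i hzi
        by_cases hiv : i = v
        · exact hiv ▸ Set.mem_insert _ _
        · have hiS : i ∈ S := by
            by_contra hiS
            exact hzi (hsupp i v (Or.inl hiS))
          have hadj : G.Adj i v := by
            by_contra hnadj
            exact hzi (hpat i v hiv hnadj)
          exact Set.mem_insert_iff.2 (Or.inr ⟨hiS, hadj.symm⟩)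
      set Y : Matrix (Fin N) (Fin N) ℝ := a⁻¹ • vecMulVec z z with hYdef
      have hYentry : ∀ i j, Y i j = a⁻¹ * (z i * z j) := by
        intro i j; rw [hYdef]; simp [vecMulVec_apply]
      have hYpsd : (-Y).PosSemidef := by
        have h : -Y = (-a⁻¹) • vecMulVec z z := by rw [hYdef, neg_smul]
        rw [h]
        exact psd_smul_vecMulVec z (le_of_lt (neg_pos.2 (inv_lt_zero.2 hneg)))
      have hYsupp : ∀ i j, (i ∉ K ∨ j ∉ K) → Y i j = 0 := by
        intro i j hij
        rw [hYentry]
        rcases hij with h | h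
        · rw [show z i = 0 from by_contra fun hc => h (hzK i hc)]; ring
        · rw [show z j = 0 from by_contra fun hc => h (hzK j hc)]; ring
      set R : Matrix (Fin N) (Fin N) ℝ := Z - Y with hRdef
      have hzv : z v = a := rfl
      have hRva : ∀ j, R v j = 0 := by
        intro j
        rw [hRdef]
        simp only [Matrix.sub_apply]
        rw [hYentry, hzv]
        have h1 : a⁻¹ * (a * z j) = z j := by field_simp
        rw [h1]
        rw [hzdef]
        simp only
        rw [hZsym j v]
        ring
      have hRav : ∀ i, R i v = 0 := by
        intro i
        rw [hRdef]
        simp only [Matrix.sub_apply]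
        rw [hYentry, hzv]
        have h1 : a⁻¹ * (z i * a) = z i := by field_simp
        rw [h1]
        rw [hzdef]
        simp only
        ring
      have hRsupp : ∀ i j, (i ∉ S.erase v ∨ j ∉ S.erase v) → R i j = 0 := by
        intro i j hij
        rcases hij with hi | hj
        · rcases hmemerase i hi with rfl | h
          · exact hRva j
          · have h1 : Z i j = 0 := hsupp i j (Or.inl h)
            have h2 : z i = 0 := hsupp i v (Or.inl h)
            rw [hRdef]; simp only [Matrix.sub_apply]
            rw [h1, hYentry, h2]; ring
        · rcases hmemerase j hj with rfl | h
          · exact hRav i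
          · have h1 : Z i j = 0 := hsupp i j (Or.inr h)
            have h2 : z j = 0 := hsupp j v (Or.inl h)
            rw [hRdef]; simp only [Matrix.sub_apply]
            rw [h1, hYentry, h2]; ring
      have hRpat : ∀ i j, i ≠ j → ¬ G.Adj i j → R i j = 0 := by
        intro i j hij hnadj
        have hYz : Y i j = 0 := by
          by_cases hzi : z i = 0
          · rw [hYentry, hzi]; ring
          by_cases hzj : z j = 0
          · rw [hYentry, hzj]; ring
          have hiK := hzK i hzi
          have hjK := hzK j hzj
          exact absurd (hKclq hiK hjK hij) hnadj
        rw [hRdef]; simp only [Matrix.sub_apply]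
        rw [hpat i j hij hnadj, hYz]; ring
      have hRpsd : (-R).PosSemidef := by
        refine PosSemidef.of_dotProduct_mulVec_nonneg ?_ ?_
        · apply isHermitian_of_symm
          intro i j
          simp only [Matrix.neg_apply, hRdef, Matrix.sub_apply]
          rw [hZsym i j, hYentry, hYentry]
          ring
        · intro x
          rw [show star x = x from star_trivial _]
          have hsplit : -R = -Z + Y := by
            rw [hRdef]; ext i j; simp only [Matrix.neg_apply, Matrix.sub_apply, Matrix.add_apply]; ring
          rw [hsplit, add_mulVec, dotProduct_add]
          have hYquad : x ⬝ᵥ Y *ᵥ x = a⁻¹ * ((z ⬝ᵥ x) * (z ⬝ᵥ x)) := by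
            rw [hYdef, smul_mulVec, dotProduct_smul, smul_eq_mul, quad_vecMulVec]
          rw [hYquad]
          have hcs := psd_cs hpsd x (Pi.single v 1)
          have h1 : x ⬝ᵥ (-Z) *ᵥ (Pi.single v 1) = -(z ⬝ᵥ x) := by
            rw [neg_mulVec, dotProduct_neg, mulVec_single]
            rw [MulOpposite.op_one, one_smul, show Z.col v = z from rfl]
            rw [dotProduct_comm]
          have h2 : (Pi.single v 1 : Fin N → ℝ) ⬝ᵥ (-Z) *ᵥ (Pi.single v 1) = -a := by
            rw [quad_single]; simp [ha]
          rw [h1, h2] at hcs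
          have hainv : a⁻¹ < 0 := inv_lt_zero.2 hneg
          have hstep := mul_le_mul_of_nonpos_left hcs hainv.le
          have hvalue : a⁻¹ * ((x ⬝ᵥ (-Z) *ᵥ x) * -a) = -(x ⬝ᵥ (-Z) *ᵥ x) := by
            field_simp
          nlinarith [hstep, hvalue]
      obtain ⟨W', hW'psd, hW'supp, hW'sum⟩ :=
        ih (S.erase v) R hcarderase hRpsd hRsupp hRpat
      classical
      refine ⟨fun p => W' p + if p = p₀ then Y else 0, ?_, ?_, ?_⟩
      · intro p
        have h : -(W' p + if p = p₀ then Y else 0)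
            = -(W' p) + -(if p = p₀ then Y else 0) := by abel
        rw [h]
        refine psd_add (hW'psd p) ?_
        by_cases hp : p = p₀
        · simpa [hp] using hYpsd
        · simpa [hp] using Matrix.PosSemidef.zero
      · intro p i j hij
        have h1 : W' p i j = 0 := hW'supp p i j hij
        have h2 : (if p = p₀ then Y else 0) i j = 0 := by
          by_cases hp : p = p₀
          · subst hp
            simp only [if_pos rfl]
            apply hYsupp
            rcases hij with h | h
            · exact Or.inl (fun hK' => h (hp₀ ▸ hKs hK'))
            · exact Or.inr (fun hK' => h (hp₀ ▸ hKs hK'))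
          · simp [hp]
        simp only [Matrix.add_apply, h1, h2, add_zero]
      · rw [Finset.sum_add_distrib, ← hW'sum]
        rw [Finset.sum_ite_eq' Finset.univ p₀ (fun _ => Y)]
        simp only [Finset.mem_univ, if_pos]
        rw [hRdef]
        ext i j
        simp only [Matrix.sub_apply, Matrix.add_apply]
        ring


end ChordalDecompAux

open ChordalDecompAux in
/-- Chordal decomposition, Theorem 1: a symmetric matrix with the
sparsity pattern of a chordal graph `G` is negative semidefinite iff it is a sum
of negative semidefinite matrices each supported on a maximal clique
(`E_{C_p}ᵀ Z_p E_{C_p}`). -/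
theorem chordal_block_decomposition
    {N M : ℕ} (G : SimpleGraph (Fin N))
    (hchordal : IsChordal G)
    (C : Fin M → Set (Fin N))
    (hC : ∀ p, Maximal G.IsClique (C p))
    (hCall : ∀ s : Set (Fin N), Maximal G.IsClique s → ∃ p, s = C p)
    (Z : Matrix (Fin N) (Fin N) ℝ) (hZs : Z.IsSymm) :
    ((-Z).PosSemidef ∧ ∀ i j, i ≠ j → ¬ G.Adj i j → Z i j = 0) ↔
      ∃ W : Fin M → Matrix (Fin N) (Fin N) ℝ,
        (∀ p, (-(W p)).PosSemidef) ∧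
        (∀ p i j, (i ∉ C p ∨ j ∉ C p) → W p i j = 0) ∧
        Z = ∑ p, W p := by
  constructor
  · rintro ⟨hpsd, hpat⟩
    exact decomp_aux G hchordal C hCall Finset.univ.card Finset.univ Z le_rfl hpsd
      (fun i j hij => by rcases hij with h | h <;> exact absurd (Finset.mem_univ _) h) hpat
  · rintro ⟨W, hWpsd, hWsupp, rfl⟩
    refine ⟨?_, ?_⟩
    · have h : -∑ p, W p = ∑ p, -(W p) := by
        rw [Finset.sum_neg_distrib]
      rw [h]
      exact psd_sum _ hWpsd
    · intro i j hne hnadj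
      rw [Matrix.sum_apply]
      apply Finset.sum_eq_zero
      intro p _
      by_cases hi : i ∈ C p
      · by_cases hj : j ∈ C p
        · exact absurd ((hC p).1 hi hj hne) hnadj
        · exact hWsupp p i j (Or.inr hj)
      · exact hWsupp p i j (Or.inl hi)
end

section
/- Contrapositive corollary of the No-Overlap theorem: if i, j lie in maximal clique C_p and k, l lie in maximal clique C_q of Q̄ with p ≠ q, and neither (i,j) nor (k,l) is an edge of the overlap graph Q̄_o, then (V_i(H) ∩ V_j(H)) ∩ (V_k(H) ∩ V_l(H)) = ∅; consequently the blocks (Q̄)_{ij} and (Q̄)_{kl} of Q̄(X) = Q + SH + HᵀSᵀ + HᵀRH involve disjoint sets of R-parameters. -/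
/-- The in-neighborhood `V_i(H) = {k : (k,i) ∈ E(H)}` of a directed graph. -/
def inNbr {N : ℕ} (E : Fin N → Fin N → Prop) (i : Fin N) : Set (Fin N) :=
  {k | E k i}

/-- The (undirected, loopless) structure graph `Q̄` induced by the directed
interconnection structure `E(H)`:
`E(Q̄) = E(H) ∪ E(H)ᵀ ∪ {(i,j) : V_i(H) ∩ V_j(H) ≠ ∅}`. -/
def QbarGraph {N : ℕ} (E : Fin N → Fin N → Prop) : SimpleGraph (Fin N) where
  Adj i j := i ≠ j ∧ (E i j ∨ E j i ∨ (inNbr E i ∩ inNbr E j).Nonempty)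
  symm := ⟨by
    rintro i j ⟨hne, h | h | ⟨k, h1, h2⟩⟩
    · exact ⟨hne.symm, Or.inr (Or.inl h)⟩
    · exact ⟨hne.symm, Or.inl h⟩
    · exact ⟨hne.symm, Or.inr (Or.inr ⟨k, h2, h1⟩)⟩⟩
  loopless := ⟨fun i ⟨h, _⟩ => h rfl⟩

/-- `(i,j)` is an edge of the overlap graph `Q̄_o = ⋃_{p ≠ q} (𝒞_p ∩ 𝒞_q)`,
the union over pairs of distinct maximal cliques of the intersections of their
associated complete graphs. -/
def OverlapEdge {N : ℕ} (G : SimpleGraph (Fin N)) (i j : Fin N) : Prop :=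
  i ≠ j ∧ ∃ A B : Set (Fin N), Maximal G.IsClique A ∧ Maximal G.IsClique B ∧
    A ≠ B ∧ i ∈ A ∧ j ∈ A ∧ i ∈ B ∧ j ∈ B

lemma exists_maximal_clique_superset {V : Type*} (G : SimpleGraph V) (s : Set V)
    (hs : G.IsClique s) : ∃ t, s ⊆ t ∧ Maximal G.IsClique t := by
  have hch : ∀ c ⊆ {t | G.IsClique t}, IsChain (· ⊆ ·) c → c.Nonempty →
      ∃ ub ∈ {t | G.IsClique t}, ∀ s ∈ c, s ⊆ ub := by
    intro c hc hchain _
    refine ⟨⋃₀ c, ?_, fun t ht => Set.subset_sUnion_of_mem ht⟩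
    rintro x ⟨a, ha, hx⟩ y ⟨b, hb, hy⟩ hxy
    rcases hchain.total ha hb with hab | hba
    · exact hc hb (hab hx) hy hxy
    · exact hc ha hx (hba hy) hxy
  obtain ⟨m, hsm, hm⟩ := zorn_subset_nonempty {t | G.IsClique t} hch s hs
  exact ⟨m, hsm, hm⟩

/-- contrapositive of the No-Overlap theorem: if `i, j ∈ C_p` and
`k, l ∈ C_q` for distinct maximal cliques of `Q̄`, and neither `(i,j)` nor `(k,l)`
is an edge of the overlap graph `Q̄_o`, then
`(V_i(H) ∩ V_j(H)) ∩ (V_k(H) ∩ V_l(H)) = ∅`, so the blocks `(Q̄)_{ij}` and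
`(Q̄)_{kl}` involve disjoint sets of `R`-parameters. -/
theorem no_overlap_disjoint_R_parameters
    {N : ℕ} (E : Fin N → Fin N → Prop)
    (Cp Cq : Set (Fin N))
    (hCp : Maximal (QbarGraph E).IsClique Cp)
    (hCq : Maximal (QbarGraph E).IsClique Cq)
    (hpq : Cp ≠ Cq)
    (i j k l : Fin N)
    (hi : i ∈ Cp) (hj : j ∈ Cp) (hk : k ∈ Cq) (hl : l ∈ Cq)
    (hij : i ≠ j) (hkl : k ≠ l)
    (hij' : ¬ OverlapEdge (QbarGraph E) i j)
    (hkl' : ¬ OverlapEdge (QbarGraph E) k l) :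
    (inNbr E i ∩ inNbr E j) ∩ (inNbr E k ∩ inNbr E l) = ∅ := by
  by_contra hne
  obtain ⟨m, ⟨hmi, hmj⟩, hmk, hml⟩ := Set.nonempty_iff_ne_empty.2 hne
  set S : Set (Fin N) := {i, j, k, l} with hS
  have hmem : ∀ x ∈ S, m ∈ inNbr E x := by
    rintro x (rfl | rfl | rfl | rfl) <;> assumption
  have hclique : (QbarGraph E).IsClique S := by
    intro x hx y hy hxy
    exact ⟨hxy, Or.inr (Or.inr ⟨m, hmem x hx, hmem y hy⟩)⟩
  obtain ⟨D, hSD, hD⟩ := exists_maximal_clique_superset _ S hclique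
  have hiD : i ∈ D := hSD (by simp [hS])
  have hjD : j ∈ D := hSD (by simp [hS])
  have hkD : k ∈ D := hSD (by simp [hS])
  have hlD : l ∈ D := hSD (by simp [hS])
  have hDp : Cp = D := by
    by_contra h
    exact hij' ⟨hij, Cp, D, hCp, hD, h, hi, hj, hiD, hjD⟩
  have hDq : Cq = D := by
    by_contra h
    exact hkl' ⟨hkl, Cq, D, hCq, hD, h, hk, hl, hkD, hlD⟩
  exact hpq (hDp.trans hDq.symm)
end

section
/- Consequence of block structure: (Q̄)_{ij} = 0 for all X (i.e., for all choices of Q_i, S_i, R_i) whenever i ≠ j, (i,j) ∉ E(H), (j,i) ∉ E(H), and V_i(H) ∩ V_j(H) = ∅, where V_i(H) = {k : (k,i) ∈ E(H)}. Hence the structure graph Q̄ of Q̄(X) satisfies E(Q̄) ⊆ E(H) ∪ E(H)ᵀ ∪ {(i,j) : V_i(H) ∩ V_j(H) ≠ ∅}. -/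
open Matrix

/-- Block diagonality of a block matrix with block sizes `d i`. -/
def BlockDiagonal' {N : ℕ} {d : Fin N → ℕ}
    (M : Matrix ((i : Fin N) × Fin (d i)) ((i : Fin N) × Fin (d i)) ℝ) : Prop :=
  ∀ x y : (i : Fin N) × Fin (d i), x.1 ≠ y.1 → M x y = 0

/-- for every choice of block diagonal `Q, S, R` (i.e. for all `X`),
the block `(Q̄)_{ij}` of `Q̄ = Q + SH + HᵀSᵀ + HᵀRH` vanishes whenever `i ≠ j`,
`(i,j) ∉ E(H)`, `(j,i) ∉ E(H)` and `V_i(H) ∩ V_j(H) = ∅` with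
`V_i(H) = {k : (k,i) ∈ E(H)}`; hence the structure graph of `Q̄` satisfies
`E(Q̄) ⊆ E(H) ∪ E(H)ᵀ ∪ {(i,j) : V_i(H) ∩ V_j(H) ≠ ∅}`. -/
theorem Qbar_structure_subset
    {N : ℕ} {d : Fin N → ℕ}
    (E : Fin N → Fin N → Prop)
    (H : Matrix ((i : Fin N) × Fin (d i)) ((i : Fin N) × Fin (d i)) ℝ)
    (hHstruct : ∀ i j : Fin N, ¬ E i j →
      ∀ (a : Fin (d i)) (b : Fin (d j)), H ⟨i, a⟩ ⟨j, b⟩ = 0)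
    (i j : Fin N) (hij : i ≠ j)
    (hEij : ¬ E i j) (hEji : ¬ E j i)
    (hV : ¬ ∃ k : Fin N, E k i ∧ E k j) :
    ∀ Q S R : Matrix ((i : Fin N) × Fin (d i)) ((i : Fin N) × Fin (d i)) ℝ,
      BlockDiagonal' Q → BlockDiagonal' S → BlockDiagonal' R →
      ∀ (a : Fin (d i)) (b : Fin (d j)),
        (Q + S * H + Hᵀ * Sᵀ + Hᵀ * R * H) ⟨i, a⟩ ⟨j, b⟩ = 0 := by
  intro Q S R hQ hS hR a b
  have hQ0 : Q ⟨i, a⟩ ⟨j, b⟩ = 0 := hQ _ _ hij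
  have hSH : (S * H) ⟨i, a⟩ ⟨j, b⟩ = 0 := by
    rw [mul_apply]
    refine Finset.sum_eq_zero fun x _ => ?_
    by_cases hx : x.1 = i
    · rcases x with ⟨k, c⟩
      dsimp at hx; subst hx
      rw [hHstruct _ _ hEij, mul_zero]
    · rw [hS _ _ (fun h => hx h.symm), zero_mul]
  have hHS : (Hᵀ * Sᵀ) ⟨i, a⟩ ⟨j, b⟩ = 0 := by
    rw [mul_apply]
    refine Finset.sum_eq_zero fun x _ => ?_
    by_cases hx : x.1 = j
    · rcases x with ⟨k, c⟩
      dsimp at hx; subst hx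
      rw [transpose_apply, hHstruct _ _ hEji, zero_mul]
    · rw [transpose_apply (M := S), hS _ _ (fun h => hx h.symm), mul_zero]
  have hHRH : (Hᵀ * R * H) ⟨i, a⟩ ⟨j, b⟩ = 0 := by
    rw [mul_apply]
    refine Finset.sum_eq_zero fun y _ => ?_
    rw [mul_apply]
    rw [Finset.sum_mul]
    refine Finset.sum_eq_zero fun x _ => ?_
    by_cases hxy : x.1 = y.1
    · by_cases hki : E x.1 i
      · have hkj : ¬ E y.1 j := fun h => hV ⟨x.1, hki, hxy ▸ h⟩
        rcases y with ⟨k, c⟩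
        rw [hHstruct _ _ hkj, mul_zero]
      · rcases x with ⟨k, c⟩
        rw [transpose_apply, hHstruct _ _ hki, zero_mul, zero_mul]
    · rw [hR _ _ hxy, mul_zero, zero_mul]
  simp [Matrix.add_apply, hQ0, hSH, hHS, hHRH]
end
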